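/- Let A be a densely defined dissipative operator on a complex Hilbert space H such that the quadratic form f ↦ Im⟨f, Af⟩ on D(A) is bounded, i.e., there is C ≥ 0 with 0 ≤ Im⟨f, Af⟩ ≤ C‖f‖² for all f ∈ D(A). Then there exist a symmetric operator S with D(S) = D(A) and a bounded selfadjoint operator V' on H with V' ≥ 0 such that Af = Sf + i V'f for all f ∈ D(A). -/

import Mathlib

noncomputable section

open Complex

variable {H : Type*} [NormedAddCommGroup H] [InnerProductSpace ℂ H] [CompleteSpace H]

local notation "⟪" x ", " y "⟫" => @inner ℂ _ _ x y

/-- A partially defined operator is *dissipative* if `Im ⟪ψ, A ψ⟫ ≥ 0` for all `ψ` in its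
domain. -/
def Dissipative (A : H →ₗ.[ℂ] H) : Prop :=
  ∀ ψ : A.domain, 0 ≤ (⟪(ψ : H), A ψ⟫).im

/-- A partially defined operator is *symmetric* if `⟪f, S g⟫ = ⟪S f, g⟫` on its domain. -/
def IsSymmetricP (S : H →ₗ.[ℂ] H) : Prop :=
  ∀ f g : S.domain, ⟪(f : H), S g⟫ = ⟪S f, (g : H)⟫

/-- A partially defined operator is *non-negative* if `⟪f, V f⟫` is real and `≥ 0` on its
domain. -/
def NonnegP (V : H →ₗ.[ℂ] H) : Prop :=
  ∀ f : V.domain, (⟪(f : H), V f⟫).im = 0 ∧ 0 ≤ (⟪(f : H), V f⟫).re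

/-- If `A` is densely defined dissipative and the form `f ↦ Im ⟪f, A f⟫` is
bounded, then `A = S + iV'` with `S` symmetric on `D(A)` and `V'` a bounded non-negative
selfadjoint operator. -/
theorem statement14
    (A : H →ₗ.[ℂ] H) (hdense : Dense (A.domain : Set H)) (hdiss : Dissipative A)
    (C : ℝ) (hC : 0 ≤ C)
    (hbdd : ∀ f : A.domain, (⟪(f : H), A f⟫).im ≤ C * ‖(f : H)‖ ^ 2) :
    ∃ (S : H →ₗ.[ℂ] H) (V' : H →L[ℂ] H),
      S.domain = A.domain ∧ IsSymmetricP S ∧ IsSelfAdjoint V' ∧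
      (∀ f : H, 0 ≤ (⟪f, V' f⟫).re) ∧
      ∀ (x : H) (hxA : x ∈ A.domain) (hxS : x ∈ S.domain),
        A ⟨x, hxA⟩ = S ⟨x, hxS⟩ + Complex.I • V' x := by
  classical
  -- The hermitian form `B f g = (I/2) (⟪A f, g⟫ - ⟪f, A g⟫)`
  set B : A.domain → A.domain → ℂ :=
    fun f g => (Complex.I / 2) * (⟪(A f : H), (g : H)⟫ - ⟪(f : H), A g⟫) with hBdef
  have hBsymm : ∀ f g : A.domain, (starRingEnd ℂ) (B g f) = B f g := by
    intro f g
    simp only [hBdef, map_mul, map_sub, map_div₀, Complex.conj_I, map_ofNat,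
      inner_conj_symm]
    ring
  have hBself : ∀ f : A.domain, B f f = ((⟪(f : H), A f⟫).im : ℂ) := by
    intro f
    have h1 : ⟪(A f : H), (f : H)⟫ = (starRingEnd ℂ) ⟪(f : H), A f⟫ :=
      (inner_conj_symm _ _).symm
    rw [hBdef]
    simp only [h1]
    have h2 : ⟪(f : H), A f⟫ - (starRingEnd ℂ) ⟪(f : H), A f⟫
        = (2 * (⟪(f : H), A f⟫).im : ℝ) * Complex.I := Complex.sub_conj _
    have : (starRingEnd ℂ) ⟪(f : H), A f⟫ - ⟪(f : H), A f⟫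
        = -((2 * (⟪(f : H), A f⟫).im : ℝ) * Complex.I) := by rw [← h2]; ring
    rw [this]
    push_cast
    linear_combination (-((⟪(f : H), A f⟫).im : ℂ)) * Complex.I_sq
  have hBadd_left : ∀ x y z : A.domain, B (x + y) z = B x z + B y z := by
    intro x y z
    simp only [hBdef, A.map_add, Submodule.coe_add, inner_add_left]
    ring
  have hBsmul_left : ∀ (x y : A.domain) (r : ℂ),
      B (r • x) y = (starRingEnd ℂ) r * B x y := by
    intro x y r
    simp only [hBdef, A.map_smul, Submodule.coe_smul, inner_smul_left]
    ring
  have hBadd_right : ∀ x y z : A.domain, B x (y + z) = B x y + B x z := by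
    intro x y z
    rw [← hBsymm, ← hBsymm x y, ← hBsymm x z, ← map_add]
    rw [hBadd_left]
  have hBsmul_right : ∀ (x y : A.domain) (r : ℂ), B x (r • y) = r * B x y := by
    intro x y r
    rw [← hBsymm, ← hBsymm x y, hBsmul_left, map_mul, RingHomCompTriple.comp_apply,
      RingHom.id_apply]
  have hBre : ∀ f : A.domain, (B f f).re = (⟪(f : H), A f⟫).im := by
    intro f; rw [hBself]; simp
  -- Cauchy-Schwarz via `PreInnerProductSpace.Core`
  have hCS : ∀ f g : A.domain, ‖B f g‖ ≤ (C * ‖(f : H)‖) * ‖(g : H)‖ := by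
    intro f g
    have h : ‖B f g‖ * ‖B g f‖ ≤ RCLike.re (B f f) * RCLike.re (B g g) :=
      @InnerProductSpace.Core.inner_mul_inner_self_le ℂ A.domain _ _ _
        { inner := B
          conj_inner_symm := hBsymm
          re_inner_nonneg := fun f => by
            show (0:ℝ) ≤ RCLike.re (B f f)
            rw [RCLike.re_to_complex, hBre]; exact hdiss f
          add_left := hBadd_left
          smul_left := fun x y r => hBsmul_left x y r } f g
    rw [RCLike.re_to_complex, RCLike.re_to_complex] at h
    have h1 : ‖B g f‖ = ‖B f g‖ := by
      rw [← hBsymm f g]; exact (RCLike.norm_conj _).symm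
    rw [h1, hBre f, hBre g] at h
    have hf2 := hbdd f
    have hg2 := hbdd g
    have hf4 := hdiss f
    have hg4 := hdiss g
    have hfg : ‖B f g‖ * ‖B f g‖ ≤ ((C * ‖(f : H)‖) * ‖(g : H)‖) * ((C * ‖(f : H)‖) * ‖(g : H)‖) := by
      nlinarith [norm_nonneg ((f : H)), norm_nonneg ((g : H)), sq_nonneg (‖(f : H)‖ * ‖(g : H)‖)]
    nlinarith [norm_nonneg (B f g),
      mul_nonneg (mul_nonneg hC (norm_nonneg ((f : H)))) (norm_nonneg ((g : H)))]
  -- inclusion of the domain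
  set e : A.domain →L[ℂ] H := A.domain.subtypeL with hedef
  have h_dense : DenseRange e := by
    have : Set.range e = (A.domain : Set H) := Subtype.range_coe
    rw [DenseRange, this]; exact hdense
  have h_iso : Isometry (e : A.domain → H) := isometry_subtype_coe
  have h_e : IsUniformInducing (e : A.domain → H) := h_iso.isUniformInducing
  have h_eb : ∀ x : A.domain, ‖x‖ ≤ (1 : NNReal) * ‖e x‖ := by
    intro x; simp [hedef]
  -- For each `g`, the functional `f ↦ conj (B f g)`, extended to `H`
  set ell : A.domain → (A.domain →L[ℂ] ℂ) := fun g =>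
    LinearMap.mkContinuous
      { toFun := fun f => (starRingEnd ℂ) (B f g)
        map_add' := fun x y => by
          show (starRingEnd ℂ) (B (x + y) g)
            = (starRingEnd ℂ) (B x g) + (starRingEnd ℂ) (B y g)
          rw [hBadd_left, map_add]
        map_smul' := fun r x => by
          show (starRingEnd ℂ) (B (r • x) g) = r • (starRingEnd ℂ) (B x g)
          rw [hBsmul_left, map_mul]
          simp }
      (C * ‖(g : H)‖)
      (fun f => by
        simp only [LinearMap.coe_mk, AddHom.coe_mk, RCLike.norm_conj]
        calc ‖B f g‖ ≤ (C * ‖(f : H)‖) * ‖(g : H)‖ := hCS f g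
          _ = C * ‖(g : H)‖ * ‖f‖ := by rw [Submodule.norm_coe]; ring) with helldef
  have hell_apply : ∀ g f : A.domain, ell g f = (starRingEnd ℂ) (B f g) := fun g f => rfl
  set L : A.domain → (H →L[ℂ] ℂ) := fun g => (ell g).extend e with hLdef
  have hL_eq : ∀ g f : A.domain, L g (f : H) = (starRingEnd ℂ) (B f g) := by
    intro g f
    exact ContinuousLinearMap.extend_eq (ell g) h_dense h_e f
  set V0 : A.domain → H := fun g => (InnerProductSpace.toDual ℂ H).symm (L g) with hV0def
  have hV0_inner : ∀ (g : A.domain) (x : H), ⟪V0 g, x⟫ = L g x := by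
    intro g x
    exact InnerProductSpace.toDual_symm_apply
  have hV0_inner' : ∀ (g f : A.domain), ⟪(f : H), V0 g⟫ = B f g := by
    intro g f
    rw [← inner_conj_symm, hV0_inner, hL_eq]
    simp
  -- extensionality via density
  have hext : ∀ u v : H, (∀ f : A.domain, ⟪(f : H), u⟫ = ⟪(f : H), v⟫) → u = v := by
    intro u v h
    have hc1 : Continuous fun x : H => ⟪x, u⟫ := continuous_id.inner continuous_const
    have hc2 : Continuous fun x : H => ⟪x, v⟫ := continuous_id.inner continuous_const
    have heq : (fun x : H => ⟪x, u⟫) = fun x : H => ⟪x, v⟫ := by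
      apply Continuous.ext_on hdense hc1 hc2
      intro x hx
      exact h ⟨x, hx⟩
    exact ext_inner_left ℂ (fun w => congrFun heq w)
  -- V0 is linear and bounded
  set V0L : A.domain →ₗ[ℂ] H :=
    { toFun := V0
      map_add' := fun g g' => by
        apply hext
        intro f
        rw [hV0_inner', inner_add_right, hV0_inner', hV0_inner', hBadd_right]
      map_smul' := fun r g => by
        apply hext
        intro f
        rw [hV0_inner', RingHom.id_apply, inner_smul_right, hV0_inner', hBsmul_right] }
    with hV0Ldef
  have hV0bound : ∀ g : A.domain, ‖V0L g‖ ≤ C * ‖g‖ := by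
    intro g
    have h1 : ‖V0 g‖ = ‖L g‖ := by
      rw [hV0def]; exact LinearIsometryEquiv.norm_map _ _
    have h2 : ‖L g‖ ≤ (1 : NNReal) * ‖ell g‖ :=
      ContinuousLinearMap.opNorm_extend_le (ell g) h_dense h_eb
    have h3 : ‖ell g‖ ≤ C * ‖(g : H)‖ := by
      apply LinearMap.mkContinuous_norm_le
      exact mul_nonneg hC (norm_nonneg _)
    have : ‖V0L g‖ = ‖V0 g‖ := rfl
    rw [this, h1, Submodule.norm_coe g] at *
    calc ‖L g‖ ≤ (1 : NNReal) * ‖ell g‖ := h2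
      _ = ‖ell g‖ := by simp
      _ ≤ C * ‖g‖ := h3
  set V0c : A.domain →L[ℂ] H := LinearMap.mkContinuous V0L C hV0bound with hV0cdef
  set V' : H →L[ℂ] H := V0c.extend e with hV'def
  have hV'eq : ∀ g : A.domain, V' (g : H) = V0 g := by
    intro g
    have := ContinuousLinearMap.extend_eq V0c h_dense h_e g
    rw [hV'def]
    exact this
  have hV'inner : ∀ f g : A.domain, ⟪(f : H), V' (g : H)⟫ = B f g := by
    intro f g
    rw [hV'eq, hV0_inner']
  -- symmetry on the domain, then selfadjointness by density
  have hsymA : ∀ (g : A.domain) (x : H), ⟪V' x, (g : H)⟫ = ⟪x, V' (g : H)⟫ := by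
    intro g
    have hc1 : Continuous fun x : H => ⟪V' x, (g : H)⟫ :=
      (V'.continuous.inner continuous_const)
    have hc2 : Continuous fun x : H => ⟪x, V' (g : H)⟫ :=
      continuous_id.inner continuous_const
    have heq : (fun x : H => ⟪V' x, (g : H)⟫) = fun x : H => ⟪x, V' (g : H)⟫ := by
      apply Continuous.ext_on hdense hc1 hc2
      intro x hx
      have hf : ⟪V' ((⟨x, hx⟩ : A.domain) : H), (g : H)⟫
          = ⟪((⟨x, hx⟩ : A.domain) : H), V' (g : H)⟫ := by
        rw [← inner_conj_symm, hV'inner, hBsymm, hV'inner]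
      simpa using hf
    exact fun x => congrFun heq x
  have hsym : ∀ x y : H, ⟪V' x, y⟫ = ⟪x, V' y⟫ := by
    intro x
    have hc1 : Continuous fun y : H => ⟪V' x, y⟫ :=
      continuous_const.inner continuous_id
    have hc2 : Continuous fun y : H => ⟪x, V' y⟫ :=
      continuous_const.inner V'.continuous
    have heq : (fun y : H => ⟪V' x, y⟫) = fun y : H => ⟪x, V' y⟫ := by
      apply Continuous.ext_on hdense hc1 hc2
      intro y hy
      exact hsymA ⟨y, hy⟩ x
    exact fun y => congrFun heq y
  have hsa : IsSelfAdjoint V' :=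
    ContinuousLinearMap.isSelfAdjoint_iff_isSymmetric.2 (fun x y => hsym x y)
  -- nonnegativity by density
  have hnonneg : ∀ x : H, 0 ≤ (⟪x, V' x⟫).re := by
    have hc : Continuous fun x : H => (⟪x, V' x⟫).re :=
      Complex.continuous_re.comp (continuous_id.inner V'.continuous)
    have hclosed : IsClosed {x : H | 0 ≤ (⟪x, V' x⟫).re} :=
      isClosed_le continuous_const hc
    have hsub : (A.domain : Set H) ⊆ {x : H | 0 ≤ (⟪x, V' x⟫).re} := by
      intro x hx
      have h1 : ⟪((⟨x, hx⟩ : A.domain) : H), V' ((⟨x, hx⟩ : A.domain) : H)⟫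
          = B ⟨x, hx⟩ ⟨x, hx⟩ := hV'inner _ _
      have h2 : (0 : ℝ) ≤ (B ⟨x, hx⟩ ⟨x, hx⟩).re := by
        rw [hBre]; exact hdiss _
      simpa [h1] using h2
    intro x
    have : x ∈ closure (A.domain : Set H) := by rw [hdense.closure_eq]; trivial
    exact closure_minimal hsub hclosed this
  -- the symmetric part
  refine ⟨{ domain := A.domain
            toFun := A.toFun - Complex.I • ((V' : H →ₗ[ℂ] H).comp A.domain.subtype) },
    V', rfl, ?_, hsa, hnonneg, ?_⟩
  · -- symmetry of S
    intro f g
    show ⟪(f : H), A g - Complex.I • V' (g : H)⟫ = ⟪(A f : H) - Complex.I • V' (f : H), (g : H)⟫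
    rw [inner_sub_right, inner_sub_left, inner_smul_right, inner_smul_left]
    have h1 : ⟪(f : H), V' (g : H)⟫ = B f g := hV'inner f g
    have h2 : ⟪V' (f : H), (g : H)⟫ = B f g := by
      rw [hsym]; exact hV'inner f g
    rw [h1, h2, Complex.conj_I, hBdef]
    linear_combination (⟪(f : H), A g⟫ - ⟪(A f : H), (g : H)⟫) * Complex.I_sq
  · intro x hxA hxS
    show A ⟨x, hxA⟩ = (A ⟨x, hxS⟩ - Complex.I • V' x) + Complex.I • V' x
    have : A ⟨x, hxA⟩ = A ⟨x, hxS⟩ := rfl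
    rw [this]; abel
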